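/- In the online performative prediction setting, let (x_1, …, x_t) and (x̃_1, …, x̃_t) be two decision sequences in 𝒳 with corresponding data distributions p_t and p̃_t (both generated from the same p_1 by p_{s+1} = ρ p_s + (1−ρ) D(x_s)). Suppose l_t : 𝒳 × ℝ^d → [0,1] is L₀-Lipschitz in each argument. Then |E_{z ∼ p_t}[l_t(x_t, z)] − E_{z ∼ p̃_t}[l_t(x̃_t, z)]| ≤ L₀ ‖x_t − x̃_t‖₂ + L₀ (1−ρ) ‖F‖₂ Σ_{k=1}^{t−1} ρ^{k−1} ‖x_{t−k} − x̃_{t−k}‖₂. -/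

import Mathlib

open MeasureTheory

/-- Spectral norm (ℓ²-operator norm) of a real square matrix. -/
noncomputable def spec17 {d : ℕ} (M : Matrix (Fin d) (Fin d) ℝ) : ℝ :=
  ‖Matrix.toEuclideanCLM (𝕜 := ℝ) M‖

/-- A square matrix acting on Euclidean space. -/
noncomputable def mv17 {d : ℕ} (M : Matrix (Fin d) (Fin d) ℝ) (v : EuclideanSpace ℝ (Fin d)) :
    EuclideanSpace ℝ (Fin d) :=
  Matrix.toEuclideanCLM (𝕜 := ℝ) M v

/-- Lipschitz bound for online performative prediction.  Two decision
sequences `x, x̃` generate data distributions `p_t, p̃_t` from the same initial distribution via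
`p_{s+1} = ρ p_s + (1−ρ) D(x_s)`, where `D(x)` is the pushforward of `ν` under `z ↦ z + Fx`.
For a loss `l` that is `L₀`-Lipschitz in each argument and takes values in `[0,1]`,
`|E_{z∼p_t}[l(x_t,z)] − E_{z∼p̃_t}[l(x̃_t,z)]|
  ≤ L₀‖x_t − x̃_t‖ + L₀(1−ρ)‖F‖₂ ∑_{k=1}^{t−1} ρ^{k−1} ‖x_{t−k} − x̃_{t−k}‖`. -/
theorem stmt_17
    (d t : ℕ) (ht : 1 ≤ t) (ρ L0 : ℝ) (hρ : ρ ∈ Set.Ioo (0:ℝ) 1) (hL0 : 0 ≤ L0)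
    (F : Matrix (Fin d) (Fin d) ℝ)
    (X : Set (EuclideanSpace ℝ (Fin d)))
    (hXne : X.Nonempty) (hXclosed : IsClosed X) (hXconvex : Convex ℝ X)
    (ν p1 : Measure (EuclideanSpace ℝ (Fin d)))
    (hν : IsProbabilityMeasure ν) (hp1 : IsProbabilityMeasure p1)
    (hνint : Integrable (fun z => ‖z‖) ν) (hp1int : Integrable (fun z => ‖z‖) p1)
    (l : EuclideanSpace ℝ (Fin d) → EuclideanSpace ℝ (Fin d) → ℝ)
    (hl01 : ∀ x z, l x z ∈ Set.Icc (0:ℝ) 1)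
    (hlip1 : ∀ z x x', |l x z - l x' z| ≤ L0 * ‖x - x'‖)
    (hlip2 : ∀ x z z', |l x z - l x z'| ≤ L0 * ‖z - z'‖)
    (x xtil : ℕ → EuclideanSpace ℝ (Fin d)) (hx : ∀ s, x s ∈ X) (hxtil : ∀ s, xtil s ∈ X)
    (p ptil : ℕ → Measure (EuclideanSpace ℝ (Fin d)))
    (hpinit : p 1 = p1) (hptilinit : ptil 1 = p1)
    (hprec : ∀ s : ℕ, 1 ≤ s →
      p (s + 1) = ENNReal.ofReal ρ • p s
        + ENNReal.ofReal (1 - ρ) • Measure.map (fun z => z + mv17 F (x s)) ν)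
    (hptilrec : ∀ s : ℕ, 1 ≤ s →
      ptil (s + 1) = ENNReal.ofReal ρ • ptil s
        + ENNReal.ofReal (1 - ρ) • Measure.map (fun z => z + mv17 F (xtil s)) ν) :
    |(∫ z, l (x t) z ∂(p t)) - ∫ z, l (xtil t) z ∂(ptil t)|
      ≤ L0 * ‖x t - xtil t‖
        + L0 * (1 - ρ) * spec17 F *
            ∑ k ∈ Finset.Icc 1 (t - 1), ρ ^ (k - 1) * ‖x (t - k) - xtil (t - k)‖ := by
  obtain ⟨hρ0, hρ1⟩ := hρ
  have h1ρ : (0:ℝ) ≤ 1 - ρ := by linarith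
  set σ := spec17 F with hσdef
  have hσ0 : 0 ≤ σ := norm_nonneg _
  have hint : ∀ (h : EuclideanSpace ℝ (Fin d) → ℝ), Continuous h → (∀ z, |h z| ≤ 1) →
      ∀ (μ : Measure (EuclideanSpace ℝ (Fin d))), IsProbabilityMeasure μ → Integrable h μ := by
    intro h hc hb μ hμ
    exact ⟨hc.aestronglyMeasurable,
      HasFiniteIntegral.of_bounded (C := 1) (Filter.Eventually.of_forall fun z => by
        simpa [Real.norm_eq_abs] using hb z)⟩
  have hprob : ∀ s : ℕ, 1 ≤ s → IsProbabilityMeasure (p s) ∧ IsProbabilityMeasure (ptil s) := by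
    intro s hs
    induction s, hs using Nat.le_induction with
    | base => rw [hpinit, hptilinit]; exact ⟨hp1, hp1⟩
    | succ s hs ih =>
      have hmix : ∀ (μ D : Measure (EuclideanSpace ℝ (Fin d))),
          IsProbabilityMeasure μ → IsProbabilityMeasure D →
          IsProbabilityMeasure (ENNReal.ofReal ρ • μ + ENNReal.ofReal (1 - ρ) • D) := by
        intro μ D hμ hD
        constructor
        simp [Measure.add_apply, Measure.smul_apply, smul_eq_mul,
          ← ENNReal.ofReal_add hρ0.le h1ρ]
      have hmap : ∀ v : EuclideanSpace ℝ (Fin d),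
          IsProbabilityMeasure (Measure.map (fun z => z + v) ν) :=
        fun v => Measure.isProbabilityMeasure_map (measurable_add_const v).aemeasurable
      rw [hprec s hs, hptilrec s hs]
      exact ⟨hmix _ _ ih.1 (hmap _), hmix _ _ ih.2 (hmap _)⟩
  have key : ∀ g : EuclideanSpace ℝ (Fin d) → ℝ,
      (∀ z, |g z| ≤ 1) → (∀ z z', |g z - g z'| ≤ L0 * ‖z - z'‖) →
      ∀ s : ℕ, 1 ≤ s →
        |(∫ z, g z ∂(p s)) - ∫ z, g z ∂(ptil s)|
          ≤ L0 * (1 - ρ) * σ *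
              ∑ k ∈ Finset.Icc 1 (s - 1), ρ ^ (k - 1) * ‖x (s - k) - xtil (s - k)‖ := by
    intro g hg1 hgl s hs
    have hgc : Continuous g := by
      have : LipschitzWith (Real.toNNReal L0) g :=
        LipschitzWith.of_dist_le_mul fun z z' => by
          rw [Real.dist_eq, dist_eq_norm]
          simpa [Real.coe_toNNReal L0 hL0] using hgl z z'
      exact this.continuous
    induction s, hs using Nat.le_induction with
    | base =>
      rw [hpinit, hptilinit]
      simp
    | succ s hs ih =>
      obtain ⟨hps, hpts⟩ := hprob s hs
      have hmapmeas : ∀ v : EuclideanSpace ℝ (Fin d),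
          AEMeasurable (fun z : EuclideanSpace ℝ (Fin d) => z + v) ν :=
        fun v => (measurable_add_const v).aemeasurable
      have hDprob : ∀ v : EuclideanSpace ℝ (Fin d),
          IsProbabilityMeasure (Measure.map (fun z : EuclideanSpace ℝ (Fin d) => z + v) ν) :=
        fun v => Measure.isProbabilityMeasure_map (hmapmeas v)
      have hdecomp : ∀ (μ : Measure (EuclideanSpace ℝ (Fin d)))
          (v : EuclideanSpace ℝ (Fin d)), IsProbabilityMeasure μ →
          (∫ z, g z ∂(ENNReal.ofReal ρ • μ
              + ENNReal.ofReal (1 - ρ) • Measure.map (fun z => z + mv17 F v) ν))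
            = ρ * (∫ z, g z ∂μ) + (1 - ρ) * ∫ z, g (z + mv17 F v) ∂ν := by
        intro μ v hμ
        have h1 : Integrable g (ENNReal.ofReal ρ • μ) :=
          (hint g hgc hg1 μ hμ).smul_measure ENNReal.ofReal_ne_top
        have h2 : Integrable g (ENNReal.ofReal (1 - ρ) • Measure.map (fun z => z + mv17 F v) ν) :=
          (hint g hgc hg1 _ (hDprob _)).smul_measure ENNReal.ofReal_ne_top
        rw [integral_add_measure h1 h2, integral_smul_measure, integral_smul_measure,
          integral_map (hmapmeas _) hgc.aestronglyMeasurable]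
        simp [ENNReal.toReal_ofReal hρ0.le, ENNReal.toReal_ofReal h1ρ, smul_eq_mul]
      rw [hprec s hs, hptilrec s hs, hdecomp _ _ hps, hdecomp _ _ hpts]
      have hshift : |(∫ z, g (z + mv17 F (x s)) ∂ν) - ∫ z, g (z + mv17 F (xtil s)) ∂ν|
          ≤ L0 * σ * ‖x s - xtil s‖ := by
        have hi1 : Integrable (fun z => g (z + mv17 F (x s))) ν :=
          hint _ (hgc.comp (continuous_id.add continuous_const)) (fun z => hg1 _) ν hν
        have hi2 : Integrable (fun z => g (z + mv17 F (xtil s))) ν :=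
          hint _ (hgc.comp (continuous_id.add continuous_const)) (fun z => hg1 _) ν hν
        rw [← integral_sub hi1 hi2]
        have hbd : ∀ z : EuclideanSpace ℝ (Fin d),
            ‖g (z + mv17 F (x s)) - g (z + mv17 F (xtil s))‖
            ≤ L0 * σ * ‖x s - xtil s‖ := by
          intro z
          rw [Real.norm_eq_abs]
          calc |g (z + mv17 F (x s)) - g (z + mv17 F (xtil s))|
              ≤ L0 * ‖(z + mv17 F (x s)) - (z + mv17 F (xtil s))‖ := hgl _ _
            _ = L0 * ‖mv17 F (x s - xtil s)‖ := by
                simp only [mv17, map_sub]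
                congr 1
                abel_nf
            _ ≤ L0 * (σ * ‖x s - xtil s‖) := by
                apply mul_le_mul_of_nonneg_left _ hL0
                exact (Matrix.toEuclideanCLM (𝕜 := ℝ) F).le_opNorm _
            _ = L0 * σ * ‖x s - xtil s‖ := by ring
        calc |∫ z, (g (z + mv17 F (x s)) - g (z + mv17 F (xtil s))) ∂ν|
            = ‖∫ z, (g (z + mv17 F (x s)) - g (z + mv17 F (xtil s))) ∂ν‖ :=
              (Real.norm_eq_abs _).symm
          _ ≤ L0 * σ * ‖x s - xtil s‖ * (ν Set.univ).toReal :=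
              norm_integral_le_of_norm_le_const (Filter.Eventually.of_forall hbd)
          _ = L0 * σ * ‖x s - xtil s‖ := by simp
      have hsum : ∑ k ∈ Finset.Icc 1 (s + 1 - 1), ρ ^ (k - 1) * ‖x (s + 1 - k) - xtil (s + 1 - k)‖
          = ‖x s - xtil s‖
            + ρ * ∑ k ∈ Finset.Icc 1 (s - 1), ρ ^ (k - 1) * ‖x (s - k) - xtil (s - k)‖ := by
        have h0 : s + 1 - 1 = s := by omega
        rw [h0, Finset.Icc_eq_cons_Ioc hs, Finset.sum_cons]
        have h1 : Finset.Ioc 1 s = Finset.Icc 2 s := (Finset.Icc_add_one_left_eq_Ioc 1 s).symm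
        have h2 : Finset.Icc 2 s = Finset.map (addLeftEmbedding 1) (Finset.Icc 1 (s - 1)) := by
          rw [Finset.map_add_left_Icc]
          congr 1
          omega
        rw [h1, h2, Finset.sum_map, Finset.mul_sum]
        simp only [addLeftEmbedding_apply]
        congr 1
        · simp
        · apply Finset.sum_congr rfl
          intro j hj
          simp only [Finset.mem_Icc] at hj
          have hj1 : 1 ≤ j := hj.1
          have e1 : 1 + j - 1 = j := by omega
          have e2 : s + 1 - (1 + j) = s - j := by omega
          rw [e1, e2]
          have e3 : ρ ^ j = ρ * ρ ^ (j - 1) := by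
            rw [← pow_succ']
            congr 1
            omega
          rw [e3]
          ring
      rw [hsum]
      calc |(ρ * (∫ z, g z ∂(p s)) + (1 - ρ) * ∫ z, g (z + mv17 F (x s)) ∂ν)
              - (ρ * (∫ z, g z ∂(ptil s)) + (1 - ρ) * ∫ z, g (z + mv17 F (xtil s)) ∂ν)|
          = |ρ * ((∫ z, g z ∂(p s)) - ∫ z, g z ∂(ptil s))
              + (1 - ρ) * ((∫ z, g (z + mv17 F (x s)) ∂ν) - ∫ z, g (z + mv17 F (xtil s)) ∂ν)| := by
            ring_nf
        _ ≤ |ρ * ((∫ z, g z ∂(p s)) - ∫ z, g z ∂(ptil s))|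
              + |(1 - ρ) * ((∫ z, g (z + mv17 F (x s)) ∂ν) - ∫ z, g (z + mv17 F (xtil s)) ∂ν)| :=
            abs_add_le _ _
        _ = ρ * |(∫ z, g z ∂(p s)) - ∫ z, g z ∂(ptil s)|
              + (1 - ρ) * |(∫ z, g (z + mv17 F (x s)) ∂ν) - ∫ z, g (z + mv17 F (xtil s)) ∂ν| := by
            rw [abs_mul, abs_mul, abs_of_pos hρ0, abs_of_nonneg h1ρ]
        _ ≤ ρ * (L0 * (1 - ρ) * σ *
                ∑ k ∈ Finset.Icc 1 (s - 1), ρ ^ (k - 1) * ‖x (s - k) - xtil (s - k)‖)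
              + (1 - ρ) * (L0 * σ * ‖x s - xtil s‖) := by
            gcongr
        _ = L0 * (1 - ρ) * σ *
              (‖x s - xtil s‖
                + ρ * ∑ k ∈ Finset.Icc 1 (s - 1), ρ ^ (k - 1) * ‖x (s - k) - xtil (s - k)‖) := by
            ring
  obtain ⟨hpt, hptt⟩ := hprob t ht
  have habs : ∀ y z, |l y z| ≤ 1 := by
    intro y z
    have h := hl01 y z
    rw [abs_le]
    exact ⟨by linarith [h.1], h.2⟩
  have hcont : ∀ y : EuclideanSpace ℝ (Fin d), Continuous (l y) := by
    intro y
    have : LipschitzWith (Real.toNNReal L0) (l y) :=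
      LipschitzWith.of_dist_le_mul fun z z' => by
        rw [Real.dist_eq, dist_eq_norm]
        simpa [Real.coe_toNNReal L0 hL0] using hlip2 y z z'
    exact this.continuous
  have hi1 : Integrable (l (x t)) (p t) := hint _ (hcont _) (habs _) _ hpt
  have hi2 : Integrable (l (xtil t)) (p t) := hint _ (hcont _) (habs _) _ hpt
  have step1 : |(∫ z, l (x t) z ∂(p t)) - ∫ z, l (xtil t) z ∂(p t)| ≤ L0 * ‖x t - xtil t‖ := by
    rw [← integral_sub hi1 hi2]
    calc |∫ z, (l (x t) z - l (xtil t) z) ∂(p t)|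
        = ‖∫ z, (l (x t) z - l (xtil t) z) ∂(p t)‖ := (Real.norm_eq_abs _).symm
      _ ≤ L0 * ‖x t - xtil t‖ * ((p t) Set.univ).toReal :=
          norm_integral_le_of_norm_le_const (Filter.Eventually.of_forall fun z => by
            rw [Real.norm_eq_abs]; exact hlip1 z (x t) (xtil t))
      _ = L0 * ‖x t - xtil t‖ := by simp
  have step2 := key (l (xtil t)) (habs _) (hlip2 (xtil t)) t ht
  calc |(∫ z, l (x t) z ∂(p t)) - ∫ z, l (xtil t) z ∂(ptil t)|
      = |((∫ z, l (x t) z ∂(p t)) - ∫ z, l (xtil t) z ∂(p t))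
          + ((∫ z, l (xtil t) z ∂(p t)) - ∫ z, l (xtil t) z ∂(ptil t))| := by ring_nf
    _ ≤ |(∫ z, l (x t) z ∂(p t)) - ∫ z, l (xtil t) z ∂(p t)|
          + |(∫ z, l (xtil t) z ∂(p t)) - ∫ z, l (xtil t) z ∂(ptil t)| := abs_add_le _ _
    _ ≤ L0 * ‖x t - xtil t‖
          + L0 * (1 - ρ) * σ *
              ∑ k ∈ Finset.Icc 1 (t - 1), ρ ^ (k - 1) * ‖x (t - k) - xtil (t - k)‖ := by
        gcongr
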